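/- Let D ∈ (0, 1/2) and set q* = (1/2 − D)^{−1}. Then, as h ↓ 0, ∫_0^∞ ((1+x)^{2D} − x^{2D})^{q*/2} e^{−hx} dx is asymptotically equivalent to (2D)^{q*/2}·log(1/h). -/

import Mathlib

open Real Set Filter Topology MeasureTheory

lemma slope_rpow (a : ℝ) :
    Tendsto (fun u : ℝ => ((1+u)^a - 1)/u) (𝓝[≠] 0) (𝓝 a) := by
  have h3 : HasDerivAt (fun u : ℝ => 1 + u) 1 0 := (hasDerivAt_id 0).const_add 1
  have h2 : HasDerivAt (fun u : ℝ => (1+u) ^ a) a 0 := by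
    have := h3.rpow_const (p := a) (by norm_num)
    simpa using this
  have h4 := hasDerivAt_iff_tendsto_slope.mp h2
  refine h4.congr (fun u => ?_)
  simp [slope_def_field]

lemma xf_tendsto (D p : ℝ) (hD0 : 0 < D) (hD : D < 1/2) (hp : p * (1 - 2*D) = 1) :
    Tendsto (fun x : ℝ => x * ((1+x)^(2*D) - x^(2*D))^p) atTop (𝓝 ((2*D)^p)) := by
  have hD2 : 0 < 2*D := by linarith
  have h12 : 0 < 1 - 2*D := by linarith
  have hp0 : 0 < p := by nlinarith
  have hinv : Tendsto (fun x:ℝ => x⁻¹) atTop (𝓝[≠] 0) :=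
    tendsto_inv_atTop_nhdsGT_zero.mono_right (nhdsWithin_mono _ fun y hy =>
      Set.mem_compl_singleton_iff.mpr (ne_of_gt hy))
  have h1 : Tendsto (fun x : ℝ => x * ((1+x⁻¹)^(2*D) - 1)) atTop (𝓝 (2*D)) := by
    refine ((slope_rpow (2*D)).comp hinv).congr' ?_
    filter_upwards [eventually_gt_atTop (0:ℝ)] with x hx
    simp only [Function.comp_apply, div_inv_eq_mul]
    ring
  have h2 : Tendsto (fun x : ℝ => (x * ((1+x⁻¹)^(2*D) - 1))^p) atTop (𝓝 ((2*D)^p)) :=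
    ((Real.continuousAt_rpow_const _ _ (Or.inl hD2.ne')).tendsto).comp h1
  refine h2.congr' ?_
  filter_upwards [eventually_ge_atTop (1:ℝ)] with x hx
  have hx0 : 0 < x := lt_of_lt_of_le one_pos hx
  have hA : (0:ℝ) ≤ (1+x⁻¹)^(2*D) - 1 := by
    have h1x : (1:ℝ) ≤ 1 + x⁻¹ := by
      have : 0 < x⁻¹ := inv_pos.mpr hx0
      linarith
    exact sub_nonneg.mpr (Real.one_le_rpow h1x hD2.le)
  have hbase : (1+x)^(2*D) - x^(2*D) = x^(2*D) * ((1+x⁻¹)^(2*D) - 1) := by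
    have hxx : (1:ℝ)+x = x*(1+x⁻¹) := by
      field_simp
      ring
    rw [hxx, Real.mul_rpow hx0.le (by positivity)]
    ring
  rw [hbase, Real.mul_rpow hx0.le hA, Real.mul_rpow (by positivity) hA,
    ← Real.rpow_mul hx0.le]
  have hxp : x ^ p = x * x ^ (2*D*p) := by
    rw [← Real.rpow_one_add' hx0.le (by nlinarith)]
    congr 1
    nlinarith
  rw [hxp]
  ring

set_option maxHeartbeats 1000000 in
lemma main_aux (f : ℝ → ℝ) (c : ℝ) (hc0 : 0 < c) (hcont : Continuous f)
    (hfnn : ∀ x : ℝ, 0 ≤ x → 0 ≤ f x)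
    (hxf : Tendsto (fun x => x * f x) atTop (𝓝 c)) :
    Tendsto (fun h : ℝ => (∫ x in Ioi (0:ℝ), f x * Real.exp (-(h*x))) / (c * Real.log (1/h)))
      (𝓝[>] (0:ℝ)) (𝓝 1) := by
  rw [Metric.tendsto_nhds]
  intro ε₀ hε₀
  set ε : ℝ := min (ε₀/4) (1/2) with hεdef
  have hε0 : 0 < ε := lt_min (by linarith) (by norm_num)
  have hε1 : ε ≤ 1/2 := min_le_right _ _
  have hε4 : ε ≤ ε₀/4 := min_le_left _ _
  -- tail bound
  have hev : ∀ᶠ x in atTop, |x * f x - c| < ε*c :=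
    (Metric.tendsto_nhds.mp hxf (ε*c) (by positivity)).mono
      (fun x hx => by rwa [Real.dist_eq] at hx)
  obtain ⟨A₀, hA₀⟩ := eventually_atTop.mp hev
  set A : ℝ := max A₀ 1 with hAdef
  have hA1 : (1:ℝ) ≤ A := le_max_right _ _
  have hA0 : (0:ℝ) < A := lt_of_lt_of_le one_pos hA1
  have hlogA : 0 ≤ Real.log A := Real.log_nonneg hA1
  have hflb : ∀ x : ℝ, A ≤ x → (1-ε)*c*x⁻¹ ≤ f x := by
    intro x hx
    have hx0 : 0 < x := lt_of_lt_of_le hA0 hx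
    have h1 := abs_lt.mp (hA₀ x (le_trans (le_max_left _ _) hx))
    have h2 : (1-ε)*c ≤ x * f x := by nlinarith [h1.1]
    calc (1-ε)*c*x⁻¹ ≤ (x * f x) * x⁻¹ :=
          mul_le_mul_of_nonneg_right h2 (inv_nonneg.mpr hx0.le)
      _ = f x := by field_simp
  have hfub : ∀ x : ℝ, A ≤ x → f x ≤ (1+ε)*c*x⁻¹ := by
    intro x hx
    have hx0 : 0 < x := lt_of_lt_of_le hA0 hx
    have h1 := abs_lt.mp (hA₀ x (le_trans (le_max_left _ _) hx))
    have h2 : x * f x ≤ (1+ε)*c := by nlinarith [h1.2]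
    calc f x = (x * f x) * x⁻¹ := by field_simp
      _ ≤ ((1+ε)*c) * x⁻¹ := mul_le_mul_of_nonneg_right h2 (inv_nonneg.mpr hx0.le)
  obtain ⟨B, hB⟩ := (isCompact_Icc (a := (0:ℝ)) (b := A)).exists_bound_of_continuousOn
    hcont.continuousOn
  set B' : ℝ := max B ((1+ε)*c) with hB'def
  have hB'0 : 0 < B' := lt_of_lt_of_le (by positivity) (le_max_right _ _)
  have hglob : ∀ x : ℝ, 0 ≤ x → f x ≤ B' := by
    intro x hx
    rcases le_total x A with hc1|hc1
    · refine le_trans (le_trans (le_abs_self _) ?_) (le_max_left _ _)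
      simpa [Real.norm_eq_abs] using hB x ⟨hx, hc1⟩
    · refine le_trans (hfub x hc1) (le_trans ?_ (le_max_right _ _))
      have hx1 : (1:ℝ) ≤ x := le_trans hA1 hc1
      have hxi : x⁻¹ ≤ 1 := inv_le_one_of_one_le₀ hx1
      calc (1+ε)*c*x⁻¹ ≤ (1+ε)*c*1 :=
            mul_le_mul_of_nonneg_left hxi (by positivity)
        _ = (1+ε)*c := mul_one _
  have hmeas : ∀ h : ℝ, AEStronglyMeasurable (fun x => f x * Real.exp (-(h*x)))
      (volume.restrict (Ioi 0)) := fun h =>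
    (hcont.mul (Real.continuous_exp.comp ((continuous_const.mul continuous_id).neg))).aestronglyMeasurable
  have hint : ∀ h : ℝ, 0 < h → IntegrableOn (fun x => f x * Real.exp (-(h*x))) (Ioi 0) := by
    intro h hh
    refine Integrable.mono' ((exp_neg_integrableOn_Ioi 0 hh).const_mul B') (hmeas h) ?_
    filter_upwards [ae_restrict_mem measurableSet_Ioi] with x hx
    have hx0 : (0:ℝ) < x := hx
    rw [Real.norm_eq_abs, abs_of_nonneg (mul_nonneg (hfnn x hx0.le) (Real.exp_nonneg _))]
    have hxx : -h*x = -(h*x) := neg_mul h x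
    rw [hxx]
    exact mul_le_mul_of_nonneg_right (hglob x hx0.le) (Real.exp_nonneg _)
  set K : ℝ := max ((B'*A + 2*c)/(ε*c)) ((Real.log A + 1)/ε) with hKdef
  have hLtend : Tendsto (fun h : ℝ => Real.log (1/h)) (𝓝[>] (0:ℝ)) atTop := by
    have h1 := Real.tendsto_log_atTop.comp (tendsto_inv_nhdsGT_zero (𝕜 := ℝ))
    exact h1.congr fun x => by rw [Function.comp_apply, one_div]
  have hmem0 : (0:ℝ) ∈ Ico (0:ℝ) (1/A) := ⟨le_rfl, by positivity⟩
  filter_upwards [Ioo_mem_nhdsGT_of_mem hmem0, hLtend.eventually_ge_atTop K] with h hmem hLK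
  obtain ⟨hh0, hhA⟩ := hmem
  set L : ℝ := Real.log (1/h) with hLdef
  have hAh : A ≤ 1/h := by
    rw [le_div_iff₀ hh0]
    nlinarith [(lt_div_iff₀ hA0).mp hhA]
  have h1h0 : 0 < 1/h := by positivity
  have hεL1 : Real.log A + 1 ≤ ε*L := by
    have h1 : (Real.log A + 1)/ε ≤ L := le_trans (le_max_right _ _) hLK
    calc Real.log A + 1 = ε * ((Real.log A + 1)/ε) := by field_simp
      _ ≤ ε * L := mul_le_mul_of_nonneg_left h1 hε0.le
  have hεL2 : B'*A + 2*c ≤ ε*c*L := by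
    have h1 : (B'*A + 2*c)/(ε*c) ≤ L := le_trans (le_max_left _ _) hLK
    calc B'*A + 2*c = (ε*c) * ((B'*A + 2*c)/(ε*c)) := by field_simp
      _ ≤ (ε*c) * L := mul_le_mul_of_nonneg_left h1 (by positivity)
    -- note ε*c*L assoc
  have hL0 : 0 < L := by nlinarith [hεL1, hlogA, hε1]
  set I : ℝ := ∫ x in Ioi (0:ℝ), f x * Real.exp (-(h*x)) with hIdef
  have intIoc : IntegrableOn (fun x => f x * Real.exp (-(h*x))) (Ioc A (1/h)) :=
    (hint h hh0).mono_set (fun x hx => lt_trans hA0 hx.1)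
  -- lower bound
  have lower1 : (∫ x in Ioc A (1/h), ((1-ε)*c)*(x⁻¹ - h)) ≤
      ∫ x in Ioc A (1/h), f x * Real.exp (-(h*x)) := by
    refine setIntegral_mono_on ?_ intIoc measurableSet_Ioc ?_
    · refine ((continuousOn_const.mul (((continuousOn_id (s := Icc A (1/h))).inv₀
        (fun x hx => (lt_of_lt_of_le hA0 hx.1).ne')).sub
        continuousOn_const)).integrableOn_Icc).mono_set Ioc_subset_Icc_self
    · intro x hx
      have hx0 : 0 < x := lt_trans hA0 hx.1
      have h2 : 1 - h*x ≤ Real.exp (-(h*x)) := by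
        nlinarith [Real.add_one_le_exp (-(h*x))]
      have h3 : 0 ≤ 1 - h*x := by nlinarith [(le_div_iff₀ hh0).mp hx.2]
      have hxne : x ≠ 0 := hx0.ne'
      have heq2 : ((1-ε)*c)*(x⁻¹ - h) = ((1-ε)*c*x⁻¹) * (1 - h*x) := by
        have hx1 : x * x⁻¹ = 1 := mul_inv_cancel₀ hxne
        linear_combination ((1-ε)*c*h) * hx1
      rw [heq2]
      have hnn : 0 ≤ (1-ε)*c*x⁻¹ := by
        have : (0:ℝ) ≤ 1-ε := by linarith
        positivity
      exact mul_le_mul (hflb x hx.1.le) h2 h3 (hfnn x hx0.le)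
  have lower2 : (∫ x in Ioc A (1/h), f x * Real.exp (-(h*x))) ≤ I := by
    refine setIntegral_mono_set (hint h hh0) ?_ ?_
    · filter_upwards [ae_restrict_mem measurableSet_Ioi] with x hx
      exact mul_nonneg (hfnn x (le_of_lt hx)) (Real.exp_nonneg _)
    · exact HasSubset.Subset.eventuallyLE (fun x hx => lt_trans hA0 hx.1)
  have lowerval : (1-ε)*c*(L - Real.log A - 1) ≤
      ∫ x in Ioc A (1/h), ((1-ε)*c)*(x⁻¹ - h) := by
    have hcalc : (∫ x in Ioc A (1/h), ((1-ε)*c)*(x⁻¹ - h)) =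
        (1-ε)*c*((L - Real.log A) - (1 - h*A)) := by
      have hii : IntervalIntegrable (fun x:ℝ => x⁻¹) volume A (1/h) := by
        refine ContinuousOn.intervalIntegrable (ContinuousOn.inv₀ continuousOn_id ?_)
        intro x hx
        rw [uIcc_of_le hAh] at hx
        exact (lt_of_lt_of_le hA0 hx.1).ne'
      rw [← intervalIntegral.integral_of_le hAh, intervalIntegral.integral_const_mul,
        intervalIntegral.integral_sub hii intervalIntegrable_const,
        integral_inv_of_pos hA0 h1h0, intervalIntegral.integral_const,
        Real.log_div h1h0.ne' hA0.ne', smul_eq_mul]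
      have hhh : (1/h - A) * h = 1 - h*A := by field_simp
      rw [hhh]
    rw [hcalc]
    have hεc : 0 ≤ (1-ε)*c := by nlinarith
    nlinarith [mul_nonneg hεc (mul_nonneg hh0.le hA0.le)]
  -- upper bound
  have hsplit : I = (∫ x in Ioc (0:ℝ) A, f x * Real.exp (-(h*x))) +
      ∫ x in Ioi A, f x * Real.exp (-(h*x)) := by
    rw [hIdef, ← Set.Ioc_union_Ioi_eq_Ioi hA0.le]
    exact setIntegral_union (Set.Ioc_disjoint_Ioi le_rfl) measurableSet_Ioi
      ((hint h hh0).mono_set Set.Ioc_subset_Ioi_self)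
      ((hint h hh0).mono_set (Set.Ioi_subset_Ioi hA0.le))
  have hsplit2 : (∫ x in Ioi A, f x * Real.exp (-(h*x))) =
      (∫ x in Ioc A (1/h), f x * Real.exp (-(h*x))) +
      ∫ x in Ioi (1/h), f x * Real.exp (-(h*x)) := by
    rw [← Set.Ioc_union_Ioi_eq_Ioi hAh]
    exact setIntegral_union (Set.Ioc_disjoint_Ioi le_rfl) measurableSet_Ioi intIoc
      ((hint h hh0).mono_set (Set.Ioi_subset_Ioi h1h0.le))
  have up1 : (∫ x in Ioc (0:ℝ) A, f x * Real.exp (-(h*x))) ≤ B' * A := by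
    have hmono : (∫ x in Ioc (0:ℝ) A, f x * Real.exp (-(h*x))) ≤ ∫ _ in Ioc (0:ℝ) A, B' := by
      refine setIntegral_mono_on ((hint h hh0).mono_set Set.Ioc_subset_Ioi_self)
        ((integrableOn_const_iff enorm_ne_top).mpr (Or.inr ?_)) measurableSet_Ioc ?_
      · rw [Real.volume_Ioc]; exact ENNReal.ofReal_lt_top
      · intro x hx
        have hx0 : 0 < x := hx.1
        have hexp1 : Real.exp (-(h*x)) ≤ 1 := Real.exp_le_one_iff.mpr (by nlinarith)
        calc f x * Real.exp (-(h*x)) ≤ B' * 1 :=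
              mul_le_mul (hglob x hx0.le) hexp1 (Real.exp_nonneg _) hB'0.le
          _ = B' := mul_one _
    refine le_trans hmono ?_
    rw [setIntegral_const, Real.volume_real_Ioc_of_le hA0.le, smul_eq_mul]
    nlinarith
  have up2 : (∫ x in Ioc A (1/h), f x * Real.exp (-(h*x))) ≤ (1+ε)*c*(L - Real.log A) := by
    have hmono : (∫ x in Ioc A (1/h), f x * Real.exp (-(h*x))) ≤
        ∫ x in Ioc A (1/h), ((1+ε)*c)*x⁻¹ := by
      refine setIntegral_mono_on intIoc ?_ measurableSet_Ioc ?_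
      · refine ((continuousOn_const.mul ((continuousOn_id (s := Icc A (1/h))).inv₀
          (fun x hx => (lt_of_lt_of_le hA0 hx.1).ne'))).integrableOn_Icc).mono_set
          Ioc_subset_Icc_self
      · intro x hx
        have hx0 : 0 < x := lt_trans hA0 hx.1
        have hexp1 : Real.exp (-(h*x)) ≤ 1 := Real.exp_le_one_iff.mpr (by nlinarith)
        calc f x * Real.exp (-(h*x)) ≤ ((1+ε)*c*x⁻¹) * 1 :=
              mul_le_mul (hfub x hx.1.le) hexp1 (Real.exp_nonneg _) (by positivity)
          _ = ((1+ε)*c)*x⁻¹ := by ring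
    have hval : (∫ x in Ioc A (1/h), ((1+ε)*c)*x⁻¹) = (1+ε)*c*(L - Real.log A) := by
      rw [← intervalIntegral.integral_of_le hAh, intervalIntegral.integral_const_mul,
        integral_inv_of_pos hA0 h1h0, Real.log_div h1h0.ne' hA0.ne']
    linarith [hmono, le_of_eq hval]
  have up3 : (∫ x in Ioi (1/h), f x * Real.exp (-(h*x))) ≤ (1+ε)*c := by
    have hexpint : IntegrableOn (fun x => Real.exp (-(h*x))) (Ioi (1/h)) := by
      have := exp_neg_integrableOn_Ioi (1/h) hh0
      simpa [neg_mul] using this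
    have hmono : (∫ x in Ioi (1/h), f x * Real.exp (-(h*x))) ≤
        ∫ x in Ioi (1/h), ((1+ε)*c*h) * Real.exp (-(h*x)) := by
      refine setIntegral_mono_on ((hint h hh0).mono_set (Set.Ioi_subset_Ioi h1h0.le))
        (hexpint.const_mul _) measurableSet_Ioi ?_
      intro x hx
      have hx0 : 0 < x := lt_trans h1h0 hx
      have hxi : x⁻¹ ≤ h := by
        rw [← one_div, div_le_iff₀ hx0]
        nlinarith [(div_le_iff₀ hh0).mp (le_of_lt hx)]
      have hfx : f x ≤ (1+ε)*c*h := by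
        refine le_trans (hfub x (le_trans hAh (le_of_lt hx))) ?_
        exact mul_le_mul_of_nonneg_left hxi (by positivity)
      exact mul_le_mul_of_nonneg_right hfx (Real.exp_nonneg _)
    have hcomp : (∫ x in Ioi (1/h), Real.exp (-(h*x))) = h⁻¹ * Real.exp (-(h*(1/h))) := by
      have h1 := integral_comp_mul_left_Ioi (fun x => Real.exp (-x)) (1/h) hh0
      rw [integral_exp_neg_Ioi, smul_eq_mul] at h1
      exact h1
    have hval : (∫ x in Ioi (1/h), ((1+ε)*c*h) * Real.exp (-(h*x))) =
        (1+ε)*c*Real.exp (-1) := by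
      rw [MeasureTheory.integral_const_mul, hcomp]
      rw [mul_one_div_cancel hh0.ne']
      field_simp
    refine le_trans hmono (le_trans (le_of_eq hval) ?_)
    have he1 : Real.exp (-1) ≤ 1 := Real.exp_le_one_iff.mpr (by norm_num)
    nlinarith [mul_le_mul_of_nonneg_left he1 (show (0:ℝ) ≤ (1+ε)*c by positivity)]
  -- assemble
  have hup : I ≤ (1+2*ε)*c*L := by
    have hI : I ≤ B' * A + ((1+ε)*c*(L - Real.log A) + (1+ε)*c) := by
      rw [hsplit, hsplit2]; linarith
    nlinarith [hεL2, mul_nonneg (mul_nonneg (by linarith : (0:ℝ) ≤ 1+ε) hc0.le) hlogA,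
      mul_le_mul_of_nonneg_right hε1 hc0.le]
  have hlow : (1-2*ε)*c*L ≤ I := by
    have h1 : (1-ε)*c*(L - Real.log A - 1) ≤ I := le_trans lowerval (le_trans lower1 lower2)
    nlinarith [mul_le_mul_of_nonneg_left hεL1 hc0.le,
      mul_nonneg (mul_nonneg hε0.le hc0.le) (by linarith : (0:ℝ) ≤ Real.log A + 1)]
  have hcL : 0 < c*L := mul_pos hc0 hL0
  rw [Real.dist_eq]
  have hF1 : I / (c*L) ≤ 1 + 2*ε := by rw [div_le_iff₀ hcL]; nlinarith
  have hF2 : 1 - 2*ε ≤ I / (c*L) := by rw [le_div_iff₀ hcL]; nlinarith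
  have habs : |I/(c*L) - 1| ≤ 2*ε := abs_le.mpr ⟨by linarith, by linarith⟩
  linarith

theorem stmt_8 (D : ℝ) (hD0 : 0 < D) (hD : D < 1/2) :
    Filter.Tendsto
      (fun h : ℝ =>
        (∫ x in Set.Ioi (0:ℝ),
          ((1 + x) ^ (2 * D) - x ^ (2 * D)) ^ ((1 / (1/2 - D)) / 2) * Real.exp (-(h * x))) /
        ((2 * D) ^ ((1 / (1/2 - D)) / 2) * Real.log (1 / h)))
      (nhdsWithin 0 (Set.Ioi 0)) (nhds 1) := by
  have h12 : (0:ℝ) < 1/2 - D := by linarith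
  have hD2 : 0 < 2*D := by linarith
  have hp0 : 0 ≤ (1 / (1/2 - D)) / 2 := by positivity
  have hpkey : ((1 / (1/2 - D)) / 2) * (1 - 2*D) = 1 := by
    have hne : (1/2 - D) ≠ 0 := ne_of_gt h12
    have h1 : (1/2 - D)⁻¹ * (1/2 - D) = 1 := inv_mul_cancel₀ hne
    linear_combination h1
  exact main_aux (fun x => ((1+x)^(2*D) - x^(2*D))^((1 / (1/2 - D)) / 2))
    ((2*D)^((1 / (1/2 - D)) / 2))
    (Real.rpow_pos_of_pos hD2 _)
    ((((continuous_const.add continuous_id).rpow_const (fun x => Or.inr hD2.le)).sub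
      (continuous_id.rpow_const (fun x => Or.inr hD2.le))).rpow_const (fun x => Or.inr hp0))
    (fun x hx => Real.rpow_nonneg
      (sub_nonneg.mpr (Real.rpow_le_rpow hx (by linarith) hD2.le)) _)
    (xf_tendsto D _ hD0 hD hpkey)
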